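/- arXiv:0801.1966 — 2 statements merged into one kernel-verified Lean document; each statement's English description precedes it below -/
import Mathlib

section
/- Let X be a set containing at least two distinct elements, and let L be any real-valued functional defined on all gambles on X such that L(f − f∘T) ≥ 0 and L(f∘T − f) ≥ 0 for every gamble f and every map T : X → X. Then there is no coherent prevision P on X with P(f) ≥ L(f) for all gambles f; in particular, there is no coherent prevision P on X satisfying P(f∘T) = P(f) for every gamble f and every map T : X → X. -/
def IsGamble {X : Type*} (f : X → ℝ) : Prop :=
  BddAbove (Set.range f) ∧ BddBelow (Set.range f)

def IsCoherentLowerPrevision {X : Type*} (L : (X → ℝ) → ℝ) : Prop :=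
  (∀ f : X → ℝ, IsGamble f → sInf (Set.range f) ≤ L f) ∧
  (∀ f g : X → ℝ, IsGamble f → IsGamble g → L f + L g ≤ L (f + g)) ∧
  (∀ f : X → ℝ, IsGamble f → ∀ c : ℝ, 0 ≤ c → L (c • f) = c * L f)

def IsCoherentPrevision {X : Type*} (P : (X → ℝ) → ℝ) : Prop :=
  (∀ f g : X → ℝ, IsGamble f → IsGamble g → P (f + g) = P f + P g) ∧
  (∀ f : X → ℝ, IsGamble f → sInf (Set.range f) ≤ P f)

def IsTransformationMonoid {X : Type*} (𝒯 : Set (X → X)) : Prop :=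
  id ∈ 𝒯 ∧ ∀ S ∈ 𝒯, ∀ T ∈ 𝒯, S ∘ T ∈ 𝒯

def Dominating {X : Type*} (L : (X → ℝ) → ℝ) : Set ((X → ℝ) → ℝ) :=
  {P | IsCoherentPrevision P ∧ ∀ f : X → ℝ, IsGamble f → L f ≤ P f}

lemma gamble_bounds {X : Type*} {f : X → ℝ} (hf : IsGamble f) :
    ∃ a b : ℝ, ∀ x, a ≤ f x ∧ f x ≤ b := by
  obtain ⟨⟨b, hb⟩, ⟨a, ha⟩⟩ := hf
  exact ⟨a, b, fun x => ⟨ha ⟨x, rfl⟩, hb ⟨x, rfl⟩⟩⟩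

lemma gamble_of_bounds {X : Type*} {f : X → ℝ} {a b : ℝ}
    (h : ∀ x, a ≤ f x ∧ f x ≤ b) : IsGamble f := by
  constructor
  · exact ⟨b, by rintro y ⟨x, rfl⟩; exact (h x).2⟩
  · exact ⟨a, by rintro y ⟨x, rfl⟩; exact (h x).1⟩

lemma gamble_comp {X : Type*} {f : X → ℝ} (hf : IsGamble f) (T : X → X) :
    IsGamble (f ∘ T) := by
  obtain ⟨a, b, h⟩ := gamble_bounds hf
  exact gamble_of_bounds (fun x => h (T x))

lemma gamble_sub {X : Type*} {f g : X → ℝ} (hf : IsGamble f) (hg : IsGamble g) :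
    IsGamble (f - g) := by
  obtain ⟨a, b, h⟩ := gamble_bounds hf
  obtain ⟨c, d, h'⟩ := gamble_bounds hg
  refine gamble_of_bounds (a := a - d) (b := b - c) (fun x => ?_)
  constructor
  · simpa using sub_le_sub (h x).1 (h' x).2
  · simpa using sub_le_sub (h x).2 (h' x).1

lemma gamble_const {X : Type*} (c : ℝ) : IsGamble (fun _ : X => c) :=
  gamble_of_bounds (a := c) (b := c) (fun _ => ⟨le_refl c, le_refl c⟩)

lemma gamble_zero {X : Type*} : IsGamble (0 : X → ℝ) := gamble_const 0

lemma prev_zero {X : Type*} {P : (X → ℝ) → ℝ} (hP : IsCoherentPrevision P) :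
    P 0 = 0 := by
  have h := hP.1 0 0 gamble_zero gamble_zero
  simp at h
  linarith

theorem stmt4 (X : Type*) (x₀ x₁ : X) (hx : x₀ ≠ x₁) (L : (X → ℝ) → ℝ)
    (hinv : ∀ f : X → ℝ, IsGamble f → ∀ T : X → X,
      0 ≤ L (f - f ∘ T) ∧ 0 ≤ L (f ∘ T - f)) :
    (¬ ∃ P : (X → ℝ) → ℝ, IsCoherentPrevision P ∧
        ∀ f : X → ℝ, IsGamble f → L f ≤ P f) ∧
    (¬ ∃ P : (X → ℝ) → ℝ, IsCoherentPrevision P ∧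
        ∀ f : X → ℝ, IsGamble f → ∀ T : X → X, P (f ∘ T) = P f) := by
  classical
  have hNE : Nonempty X := ⟨x₀⟩
  -- no invariant coherent prevision
  have key : ¬ ∃ P : (X → ℝ) → ℝ, IsCoherentPrevision P ∧
      ∀ f : X → ℝ, IsGamble f → ∀ T : X → X, P (f ∘ T) = P f := by
    rintro ⟨P, hP, hPT⟩
    set f : X → ℝ := fun x => if x = x₀ then 1 else 0 with hfdef
    have hf : IsGamble f := by
      refine gamble_of_bounds (a := 0) (b := 1) (fun x => ?_)
      by_cases h : x = x₀ <;> simp [hfdef, h]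
    have h1 : (f ∘ fun _ : X => x₀) = fun _ : X => (1 : ℝ) := by
      funext x; simp [hfdef]
    have h0 : (f ∘ fun _ : X => x₁) = (0 : X → ℝ) := by
      funext x; simp [hfdef, hx.symm]
    have e1 : P (f ∘ fun _ : X => x₀) = P f := hPT f hf _
    have e0 : P (f ∘ fun _ : X => x₁) = P f := hPT f hf _
    have hge : (1 : ℝ) ≤ P (f ∘ fun _ : X => x₀) := by
      have := hP.2 (f ∘ fun _ : X => x₀) (gamble_comp hf (fun _ : X => x₀))
      rw [h1] at this ⊢
      simpa [Set.range_const] using this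
    rw [h0, prev_zero hP] at e0
    rw [e1, ← e0] at hge
    linarith
  refine ⟨?_, key⟩
  rintro ⟨P, hP, hdom⟩
  apply key
  refine ⟨P, hP, fun f hf T => ?_⟩
  have hfT := gamble_comp hf T
  have h1 : 0 ≤ P (f - f ∘ T) :=
    le_trans (hinv f hf T).1 (hdom _ (gamble_sub hf hfT))
  have h2 : 0 ≤ P (f ∘ T - f) :=
    le_trans (hinv f hf T).2 (hdom _ (gamble_sub hfT hf))
  have hsum : P ((f - f ∘ T) + (f ∘ T - f)) = P (f - f ∘ T) + P (f ∘ T - f) :=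
    hP.1 _ _ (gamble_sub hf hfT) (gamble_sub hfT hf)
  have hz : (f - f ∘ T) + (f ∘ T - f) = 0 := by ring
  rw [hz, prev_zero hP] at hsum
  have he : P (f - f ∘ T) = 0 := by linarith
  have hsplit : P ((f - f ∘ T) + f ∘ T) = P (f - f ∘ T) + P (f ∘ T) :=
    hP.1 _ _ (gamble_sub hf hfT) hfT
  have : (f - f ∘ T) + f ∘ T = f := by ring
  rw [this, he, zero_add] at hsplit
  exact hsplit.symm
end

section
/- Let T be a transformation of a nonempty set X, let 𝒦 be a T-invariant set of gambles on X (f ∈ 𝒦 implies f∘T ∈ 𝒦), and let L : 𝒦 → ℝ be a lower prevision that avoids sure loss and is weakly T-invariant (L(f∘T) ≥ L(f) for all f ∈ 𝒦). Then there exist strongly T-invariant coherent lower previsions on all gambles on X that dominate L on 𝒦, and the point-wise smallest such lower prevision E_{L,T} is given by E_{L,T}(f) = lim_{n→∞} E_L( (1/n) Σ_{k=0}^{n−1} f∘T^k ) = sup_{n≥1} E_L( (1/n) Σ_{k=0}^{n−1} f∘T^k ) for every gamble f (in particular, this limit exists), where E_L is the natural extension of L and T^k denotes the k-fold composition of T.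 -/
def AvoidsSureLoss {X : Type*} (𝒦 : Set (X → ℝ)) (L : (X → ℝ) → ℝ) : Prop :=
  ∀ (n : ℕ) (lam : Fin n → ℝ) (fs : Fin n → X → ℝ),
    (∀ k, 0 ≤ lam k) → (∀ k, fs k ∈ 𝒦) →
    0 ≤ ⨆ x : X, ∑ k, lam k * (fs k x - L (fs k))

noncomputable def NatExt {X : Type*} (𝒦 : Set (X → ℝ)) (L : (X → ℝ) → ℝ)
    (g : X → ℝ) : ℝ :=
  sSup {α : ℝ | ∃ (n : ℕ) (lam : Fin n → ℝ) (fs : Fin n → X → ℝ),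
    (∀ k, 0 ≤ lam k) ∧ (∀ k, fs k ∈ 𝒦) ∧
    α = ⨅ x : X, (g x - ∑ k, lam k * (fs k x - L (fs k)))}

set_option linter.unusedSectionVars false

section Gambles
variable {X : Type*} [Nonempty X]

lemma isGamble_of_bounds {f : X → ℝ} (a b : ℝ) (h1 : ∀ x, f x ≤ a) (h2 : ∀ x, b ≤ f x) :
    IsGamble f :=
  ⟨⟨a, by rintro _ ⟨x, rfl⟩; exact h1 x⟩, ⟨b, by rintro _ ⟨x, rfl⟩; exact h2 x⟩⟩

lemma IsGamble.le_sSup {f : X → ℝ} (hf : IsGamble f) (x : X) : f x ≤ sSup (Set.range f) :=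
  le_csSup hf.1 ⟨x, rfl⟩

lemma IsGamble.sInf_le {f : X → ℝ} (hf : IsGamble f) (x : X) : sInf (Set.range f) ≤ f x :=
  csInf_le hf.2 ⟨x, rfl⟩

lemma IsGamble.comp {f : X → ℝ} (hf : IsGamble f) (T : X → X) : IsGamble (f ∘ T) :=
  isGamble_of_bounds (sSup (Set.range f)) (sInf (Set.range f))
    (fun x => hf.le_sSup (T x)) (fun x => hf.sInf_le (T x))

lemma IsGamble.add {f g : X → ℝ} (hf : IsGamble f) (hg : IsGamble g) : IsGamble (f + g) :=
  isGamble_of_bounds (sSup (Set.range f) + sSup (Set.range g))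
    (sInf (Set.range f) + sInf (Set.range g))
    (fun x => add_le_add (hf.le_sSup x) (hg.le_sSup x))
    (fun x => add_le_add (hf.sInf_le x) (hg.sInf_le x))

lemma IsGamble.neg {f : X → ℝ} (hf : IsGamble f) : IsGamble (-f) :=
  isGamble_of_bounds (-sInf (Set.range f)) (-sSup (Set.range f))
    (fun x => neg_le_neg (hf.sInf_le x)) (fun x => neg_le_neg (hf.le_sSup x))

lemma IsGamble.sub {f g : X → ℝ} (hf : IsGamble f) (hg : IsGamble g) : IsGamble (f - g) := by
  rw [sub_eq_add_neg]; exact hf.add hg.neg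

lemma isGamble_const (c : ℝ) : IsGamble (fun _ : X => c) :=
  isGamble_of_bounds c c (fun _ => le_rfl) (fun _ => le_rfl)

lemma isGamble_zero : IsGamble (0 : X → ℝ) := isGamble_const 0

lemma IsGamble.smul {f : X → ℝ} (hf : IsGamble f) (c : ℝ) : IsGamble (c • f) := by
  rcases le_or_gt 0 c with hc | hc
  · exact isGamble_of_bounds (c * sSup (Set.range f)) (c * sInf (Set.range f))
      (fun x => mul_le_mul_of_nonneg_left (hf.le_sSup x) hc)
      (fun x => mul_le_mul_of_nonneg_left (hf.sInf_le x) hc)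
  · exact isGamble_of_bounds (c * sInf (Set.range f)) (c * sSup (Set.range f))
      (fun x => mul_le_mul_of_nonpos_left (hf.sInf_le x) hc.le)
      (fun x => mul_le_mul_of_nonpos_left (hf.le_sSup x) hc.le)

lemma isGamble_sum {ι : Type*} (s : Finset ι) (g : ι → X → ℝ)
    (h : ∀ i ∈ s, IsGamble (g i)) : IsGamble (∑ i ∈ s, g i) := by
  classical
  induction s using Finset.induction_on with
  | empty => simpa using isGamble_zero
  | insert _ _ hni ih =>
    rename_i a s
    rw [Finset.sum_insert hni]
    exact (h a (Finset.mem_insert_self a s)).add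
      (ih fun i hi => h i (Finset.mem_insert_of_mem hi))

lemma isGamble_congr {f g : X → ℝ} (h : ∀ x, f x = g x) (hf : IsGamble f) : IsGamble g :=
  funext h ▸ hf

end Gambles

section NatExtLemmas
variable {X : Type*} [Nonempty X] {𝒦 : Set (X → ℝ)} {L : (X → ℝ) → ℝ}

def natSet (𝒦 : Set (X → ℝ)) (L : (X → ℝ) → ℝ) (g : X → ℝ) : Set ℝ :=
  {α : ℝ | ∃ (n : ℕ) (lam : Fin n → ℝ) (fs : Fin n → X → ℝ),
    (∀ k, 0 ≤ lam k) ∧ (∀ k, fs k ∈ 𝒦) ∧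
    α = ⨅ x : X, (g x - ∑ k, lam k * (fs k x - L (fs k)))}

lemma natExt_eq (g : X → ℝ) : NatExt 𝒦 L g = sSup (natSet 𝒦 L g) := rfl

lemma isGamble_combo {n : ℕ} {lam : Fin n → ℝ} {fs : Fin n → X → ℝ}
    (hfs : ∀ k, IsGamble (fs k)) :
    IsGamble (fun x => ∑ k, lam k * (fs k x - L (fs k))) := by
  have H := isGamble_sum Finset.univ (fun k => lam k • (fs k - fun _ => L (fs k)))
    (fun k _ => ((hfs k).sub (isGamble_const _)).smul _)
  exact isGamble_congr (fun x => by simp [Finset.sum_apply]) H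

lemma sInf_mem_natSet (g : X → ℝ) : sInf (Set.range g) ∈ natSet 𝒦 L g := by
  refine ⟨0, Fin.elim0, Fin.elim0, fun k => k.elim0, fun k => k.elim0, ?_⟩
  simp only [Finset.univ_eq_empty, Finset.sum_empty, sub_zero]
  rfl

lemma natSet_nonempty (g : X → ℝ) : (natSet 𝒦 L g).Nonempty := ⟨_, sInf_mem_natSet g⟩

lemma natSet_le_sSup (h𝒦g : ∀ f ∈ 𝒦, IsGamble f) (hasl : AvoidsSureLoss 𝒦 L)
    {g : X → ℝ} (hg : IsGamble g) :
    ∀ α ∈ natSet 𝒦 L g, α ≤ sSup (Set.range g) := by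
  rintro α ⟨n, lam, fs, hlam, hfs, rfl⟩
  set h : X → ℝ := fun x => ∑ k, lam k * (fs k x - L (fs k)) with hh
  have hhg : IsGamble h := isGamble_combo (fun k => h𝒦g _ (hfs k))
  have hbdd : BddBelow (Set.range fun x => g x - h x) := (hg.sub hhg).2
  have hsup : (0:ℝ) ≤ ⨆ x : X, h x := hasl n lam fs hlam hfs
  refine le_of_forall_pos_le_add fun ε hε => ?_
  have : sSup (Set.range h) - ε < sSup (Set.range h) := by linarith
  obtain ⟨_, ⟨x0, rfl⟩, hx0⟩ := exists_lt_of_lt_csSup (Set.range_nonempty h) this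
  have h0 : -ε < h x0 := by
    have : (0:ℝ) ≤ sSup (Set.range h) := hsup
    linarith
  calc ⨅ x : X, (g x - h x) ≤ g x0 - h x0 := ciInf_le hbdd x0
    _ ≤ sSup (Set.range g) + ε := by
        have := hg.le_sSup x0; linarith

lemma natSet_bddAbove (h𝒦g : ∀ f ∈ 𝒦, IsGamble f) (hasl : AvoidsSureLoss 𝒦 L)
    {g : X → ℝ} (hg : IsGamble g) : BddAbove (natSet 𝒦 L g) :=
  ⟨_, natSet_le_sSup h𝒦g hasl hg⟩

lemma natExt_le_sSup (h𝒦g : ∀ f ∈ 𝒦, IsGamble f) (hasl : AvoidsSureLoss 𝒦 L)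
    {g : X → ℝ} (hg : IsGamble g) : NatExt 𝒦 L g ≤ sSup (Set.range g) :=
  csSup_le (natSet_nonempty g) (natSet_le_sSup h𝒦g hasl hg)

lemma le_natExt_of_mem (h𝒦g : ∀ f ∈ 𝒦, IsGamble f) (hasl : AvoidsSureLoss 𝒦 L)
    {g : X → ℝ} (hg : IsGamble g) {α : ℝ} (hα : α ∈ natSet 𝒦 L g) : α ≤ NatExt 𝒦 L g :=
  le_csSup (natSet_bddAbove h𝒦g hasl hg) hα

lemma sInf_le_natExt (h𝒦g : ∀ f ∈ 𝒦, IsGamble f) (hasl : AvoidsSureLoss 𝒦 L)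
    {g : X → ℝ} (hg : IsGamble g) : sInf (Set.range g) ≤ NatExt 𝒦 L g :=
  le_natExt_of_mem h𝒦g hasl hg (sInf_mem_natSet g)

end NatExtLemmas
section NatExt2
variable {X : Type*} [Nonempty X] {𝒦 : Set (X → ℝ)} {L : (X → ℝ) → ℝ}
variable (h𝒦g : ∀ f ∈ 𝒦, IsGamble f) (hasl : AvoidsSureLoss 𝒦 L)

include h𝒦g hasl

lemma natExt_superadd {g1 g2 : X → ℝ} (hg1 : IsGamble g1) (hg2 : IsGamble g2) :
    NatExt 𝒦 L g1 + NatExt 𝒦 L g2 ≤ NatExt 𝒦 L (g1 + g2) := by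
  have key : ∀ α1 ∈ natSet 𝒦 L g1, ∀ α2 ∈ natSet 𝒦 L g2,
      α1 + α2 ≤ NatExt 𝒦 L (g1 + g2) := by
    rintro α1 ⟨n1, lam1, fs1, hlam1, hfs1, rfl⟩ α2 ⟨n2, lam2, fs2, hlam2, hfs2, rfl⟩
    have hlam : ∀ k, 0 ≤ Fin.append lam1 lam2 k := by
      refine Fin.addCases ?_ ?_ <;> intro i <;>
        simp only [Fin.append_left, Fin.append_right]
      exacts [hlam1 i, hlam2 i]
    have hfs : ∀ k, Fin.append fs1 fs2 k ∈ 𝒦 := by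
      refine Fin.addCases ?_ ?_ <;> intro i <;>
        simp only [Fin.append_left, Fin.append_right]
      exacts [hfs1 i, hfs2 i]
    have hsplit : ∀ x : X,
        (∑ k, Fin.append lam1 lam2 k *
          (Fin.append fs1 fs2 k x - L (Fin.append fs1 fs2 k))) =
        (∑ k, lam1 k * (fs1 k x - L (fs1 k))) +
        (∑ k, lam2 k * (fs2 k x - L (fs2 k))) := by
      intro x
      rw [Fin.sum_univ_add]
      simp only [Fin.append_left, Fin.append_right]
    have hmem : (⨅ x : X, ((g1 + g2) x - ∑ k, Fin.append lam1 lam2 k *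
          (Fin.append fs1 fs2 k x - L (Fin.append fs1 fs2 k)))) ∈ natSet 𝒦 L (g1 + g2) :=
      ⟨n1 + n2, _, _, hlam, hfs, rfl⟩
    refine le_trans ?_ (le_natExt_of_mem h𝒦g hasl (hg1.add hg2) hmem)
    have hb1 : BddBelow (Set.range fun x => g1 x - ∑ k, lam1 k * (fs1 k x - L (fs1 k))) :=
      (hg1.sub (isGamble_combo (fun k => h𝒦g _ (hfs1 k)))).2
    have hb2 : BddBelow (Set.range fun x => g2 x - ∑ k, lam2 k * (fs2 k x - L (fs2 k))) :=
      (hg2.sub (isGamble_combo (fun k => h𝒦g _ (hfs2 k)))).2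
    refine le_ciInf fun x => ?_
    have h1 := ciInf_le hb1 x
    have h2 := ciInf_le hb2 x
    rw [hsplit x]
    simp only [Pi.add_apply]
    linarith
  have hne2 := natSet_nonempty (𝒦 := 𝒦) (L := L) g2
  rw [natExt_eq g1, natExt_eq g2]
  have h1 : sSup (natSet 𝒦 L g1) ≤ NatExt 𝒦 L (g1 + g2) - sSup (natSet 𝒦 L g2) := by
    refine csSup_le (natSet_nonempty g1) fun α1 hα1 => ?_
    rw [le_sub_iff_add_le, add_comm, ← le_sub_iff_add_le]
    refine csSup_le hne2 fun α2 hα2 => ?_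
    rw [le_sub_iff_add_le, add_comm]
    exact key α1 hα1 α2 hα2
  linarith
end NatExt2
section NatExt3
variable {X : Type*} [Nonempty X] {𝒦 : Set (X → ℝ)} {L : (X → ℝ) → ℝ}
variable (h𝒦g : ∀ f ∈ 𝒦, IsGamble f) (hasl : AvoidsSureLoss 𝒦 L)

include h𝒦g hasl

lemma natExt_zero : NatExt 𝒦 L (0 : X → ℝ) = 0 := by
  have h1 := sInf_le_natExt h𝒦g hasl (isGamble_zero (X := X))
  have h2 := natExt_le_sSup h𝒦g hasl (isGamble_zero (X := X))
  have hr : Set.range (0 : X → ℝ) = {0} := by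
    ext y; simp [eq_comm]
  rw [hr, csInf_singleton] at h1
  rw [hr, csSup_singleton] at h2
  linarith

lemma natExt_smul_le {g : X → ℝ} (hg : IsGamble g) {c : ℝ} (hc : 0 ≤ c) :
    c * NatExt 𝒦 L g ≤ NatExt 𝒦 L (c • g) := by
  rw [natExt_eq g, ← smul_eq_mul, ← Real.sSup_smul_of_nonneg hc]
  refine csSup_le ((natSet_nonempty (𝒦 := 𝒦) (L := L) g).smul_set) ?_
  rintro _ ⟨α, ⟨n, lam, fs, hlam, hfs, rfl⟩, rfl⟩
  simp only [smul_eq_mul]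
  have hmem : (⨅ x : X, ((c • g) x - ∑ k, (c * lam k) * (fs k x - L (fs k))))
      ∈ natSet 𝒦 L (c • g) :=
    ⟨n, _, _, fun k => mul_nonneg hc (hlam k), hfs, rfl⟩
  refine le_trans (le_of_eq ?_) (le_natExt_of_mem h𝒦g hasl (hg.smul c) hmem)
  rw [Real.mul_iInf_of_nonneg hc]
  refine congrArg _ (funext fun x => ?_)
  simp only [Pi.smul_apply, smul_eq_mul, Finset.mul_sum, mul_sub]
  ring_nf

lemma natExt_smul {g : X → ℝ} (hg : IsGamble g) {c : ℝ} (hc : 0 ≤ c) :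
    NatExt 𝒦 L (c • g) = c * NatExt 𝒦 L g := by
  rcases eq_or_lt_of_le hc with rfl | hc'
  · have : (0:ℝ) • g = (0 : X → ℝ) := by funext x; simp
    rw [this, natExt_zero h𝒦g hasl, zero_mul]
  · refine le_antisymm ?_ (natExt_smul_le h𝒦g hasl hg hc)
    have h2 := natExt_smul_le h𝒦g hasl (hg.smul c) (le_of_lt (inv_pos.mpr hc'))
    have he : c⁻¹ • (c • g) = g := by
      rw [smul_smul, inv_mul_cancel₀ hc'.ne', one_smul]
    rw [he] at h2
    have := mul_le_mul_of_nonneg_left h2 hc'.le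
    rw [← mul_assoc, mul_inv_cancel₀ hc'.ne', one_mul] at this
    linarith [this]

lemma le_natExt_of_memK {f : X → ℝ} (hf : f ∈ 𝒦) : L f ≤ NatExt 𝒦 L f := by
  have hmem : (⨅ x : X, (f x - ∑ k : Fin 1, (1:ℝ) * ((fun _ : Fin 1 => f) k x
      - L ((fun _ : Fin 1 => f) k)))) ∈ natSet 𝒦 L f :=
    ⟨1, fun _ => 1, fun _ => f, fun _ => zero_le_one, fun _ => hf, rfl⟩
  refine le_trans (le_of_eq ?_) (le_natExt_of_mem h𝒦g hasl (h𝒦g f hf) hmem)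
  have : ∀ x : X, (f x - ∑ k : Fin 1, (1:ℝ) * (f x - L f)) = L f := by
    intro x; simp
  simp only [this]
  exact (ciInf_const).symm

lemma natExt_comp_le {T : X → X} (h𝒦T : ∀ f ∈ 𝒦, f ∘ T ∈ 𝒦)
    (hweak : ∀ f ∈ 𝒦, L f ≤ L (f ∘ T)) {g : X → ℝ} (hg : IsGamble g) :
    NatExt 𝒦 L g ≤ NatExt 𝒦 L (g ∘ T) := by
  rw [natExt_eq g]
  refine csSup_le (natSet_nonempty g) ?_
  rintro α ⟨n, lam, fs, hlam, hfs, rfl⟩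
  have hmem : (⨅ x : X, ((g ∘ T) x - ∑ k, lam k * ((fs k ∘ T) x - L (fs k ∘ T))))
      ∈ natSet 𝒦 L (g ∘ T) :=
    ⟨n, lam, fun k => fs k ∘ T, hlam, fun k => h𝒦T _ (hfs k), rfl⟩
  refine le_trans ?_ (le_natExt_of_mem h𝒦g hasl (hg.comp T) hmem)
  have hbdd : BddBelow (Set.range fun x => g x - ∑ k, lam k * (fs k x - L (fs k))) :=
    (hg.sub (isGamble_combo fun k => h𝒦g _ (hfs k))).2
  have step1 : (⨅ x : X, (g x - ∑ k, lam k * (fs k x - L (fs k))))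
      ≤ ⨅ x : X, (g (T x) - ∑ k, lam k * (fs k (T x) - L (fs k))) :=
    le_ciInf fun x => ciInf_le hbdd (T x)
  refine step1.trans (ciInf_mono ?_ fun x => ?_)
  · exact hbdd.mono (Set.range_comp_subset_range T
      (fun x => g x - ∑ k, lam k * (fs k x - L (fs k))))
  · refine sub_le_sub_left (Finset.sum_le_sum fun k _ => ?_) _
    have := hweak (fs k) (hfs k)
    have hl := hlam k
    simp only [Function.comp_apply]
    nlinarith
end NatExt3
section CLP
variable {X : Type*} [Nonempty X] {M' : (X → ℝ) → ℝ} (hM : IsCoherentLowerPrevision M')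
include hM

lemma clp_zero : M' 0 = 0 := by
  have h := hM.2.2 0 isGamble_zero 0 le_rfl
  simpa using h

lemma clp_nonneg_of_nonneg {f : X → ℝ} (hf : IsGamble f) (h0 : ∀ x, 0 ≤ f x) : 0 ≤ M' f := by
  refine le_trans ?_ (hM.1 f hf)
  exact le_csInf (Set.range_nonempty f) (by rintro _ ⟨x, rfl⟩; exact h0 x)

lemma clp_le_sup {f : X → ℝ} (hf : IsGamble f) : M' f ≤ sSup (Set.range f) := by
  have h1 := hM.2.1 f (-f) hf hf.neg
  have h2 : f + -f = 0 := by funext x; simp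
  rw [h2, clp_zero hM] at h1
  have h3 : -sSup (Set.range f) ≤ M' (-f) := by
    refine le_trans ?_ (hM.1 (-f) hf.neg)
    refine le_csInf (Set.range_nonempty _) ?_
    rintro _ ⟨x, rfl⟩
    simpa using neg_le_neg (hf.le_sSup x)
  linarith

lemma clp_const (c : ℝ) : M' (fun _ => c) = c := by
  have hg := isGamble_const (X := X) c
  have hr : Set.range (fun _ : X => c) = {c} := Set.range_const
  have h1 := hM.1 _ hg
  have h2 := clp_le_sup hM hg
  rw [hr, csInf_singleton] at h1
  rw [hr, csSup_singleton] at h2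
  linarith

lemma clp_mono {f g : X → ℝ} (hf : IsGamble f) (hg : IsGamble g) (hle : ∀ x, f x ≤ g x) :
    M' f ≤ M' g := by
  have h1 := hM.2.1 f (g - f) hf (hg.sub hf)
  have h2 : f + (g - f) = g := by funext x; simp
  rw [h2] at h1
  have h3 : 0 ≤ M' (g - f) :=
    clp_nonneg_of_nonneg hM (hg.sub hf) (fun x => by simpa using hle x)
  linarith

lemma clp_add_const {f : X → ℝ} (hf : IsGamble f) (c : ℝ) :
    M' (fun x => f x + c) = M' f + c := by
  have hfc : IsGamble (fun x => f x + c) := hf.add (isGamble_const c)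
  have h1 := hM.2.1 f (fun _ => c) hf (isGamble_const c)
  rw [clp_const hM] at h1
  have h2 := hM.2.1 (fun x => f x + c) (fun _ => -c) hfc (isGamble_const (-c))
  rw [clp_const hM] at h2
  have h3 : (fun x => f x + c) + (fun _ : X => -c) = f := by funext x; simp
  rw [h3] at h2
  have h4 : f + (fun _ : X => c) = fun x => f x + c := by funext x; simp
  rw [h4] at h1
  linarith

lemma clp_sum {ι : Type*} (s : Finset ι) (g : ι → X → ℝ)
    (h : ∀ i ∈ s, IsGamble (g i)) : ∑ i ∈ s, M' (g i) ≤ M' (∑ i ∈ s, g i) := by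
  classical
  induction s using Finset.induction_on with
  | empty => simp [clp_zero hM]
  | insert _ _ hni ih =>
    rename_i a s
    rw [Finset.sum_insert hni, Finset.sum_insert hni]
    have h1 := hM.2.1 (g a) (∑ i ∈ s, g i) (h a (Finset.mem_insert_self a s))
      (isGamble_sum s g (fun i hi => h i (Finset.mem_insert_of_mem hi)))
    have h2 := ih (fun i hi => h i (Finset.mem_insert_of_mem hi))
    linarith

end CLP
section CLP2
variable {X : Type*} [Nonempty X] {𝒦 : Set (X → ℝ)} {L : (X → ℝ) → ℝ}
  {M' : (X → ℝ) → ℝ}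

lemma clp_natExt_le (hM : IsCoherentLowerPrevision M')
    (h𝒦g : ∀ f ∈ 𝒦, IsGamble f)
    (hdom : ∀ f ∈ 𝒦, L f ≤ M' f) {g : X → ℝ} (hg : IsGamble g) :
    NatExt 𝒦 L g ≤ M' g := by
  refine csSup_le (natSet_nonempty g) ?_
  rintro α ⟨n, lam, fs, hlam, hfs, rfl⟩
  set c0 : ℝ := ∑ k, lam k * L (fs k) with hc0
  set α : ℝ := ⨅ x : X, (g x - ∑ k, lam k * (fs k x - L (fs k))) with hα
  set F : X → ℝ := ∑ k, lam k • fs k with hF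
  have hFg : IsGamble F :=
    isGamble_sum Finset.univ _ (fun k _ => (h𝒦g _ (hfs k)).smul _)
  have hFapp : ∀ x, F x = ∑ k, lam k * fs k x := by
    intro x; rw [hF]; simp [Finset.sum_apply]
  have hbdd : BddBelow (Set.range fun x => g x - ∑ k, lam k * (fs k x - L (fs k))) :=
    (hg.sub (isGamble_combo fun k => h𝒦g _ (hfs k))).2
  have hptw : ∀ x, F x + (α - c0) ≤ g x := by
    intro x
    have h1 : α ≤ g x - ∑ k, lam k * (fs k x - L (fs k)) := ciInf_le hbdd x
    have h2 : ∑ k, lam k * (fs k x - L (fs k)) = (∑ k, lam k * fs k x) - c0 := by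
      rw [hc0, ← Finset.sum_sub_distrib]
      exact Finset.sum_congr rfl fun k _ => by ring
    rw [hFapp x]
    rw [h2] at h1
    linarith
  have hstep : M' (fun x => F x + (α - c0)) ≤ M' g :=
    clp_mono hM (hFg.add (isGamble_const _)) hg hptw
  rw [clp_add_const hM hFg] at hstep
  have hsum : ∑ k, lam k * L (fs k) ≤ M' F := by
    refine le_trans ?_ (clp_sum hM Finset.univ _ (fun k _ => (h𝒦g _ (hfs k)).smul _))
    refine Finset.sum_le_sum fun k _ => ?_
    rw [hM.2.2 (fs k) (h𝒦g _ (hfs k)) (lam k) (hlam k)]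
    exact mul_le_mul_of_nonneg_left (hdom _ (hfs k)) (hlam k)
  linarith

end CLP2
section Erg
variable {X : Type*} [Nonempty X] {T : X → X}

noncomputable def ergSum (T : X → X) (f : X → ℝ) (n : ℕ) : X → ℝ :=
  fun x => ∑ k ∈ Finset.range n, f (T^[k] x)

lemma ergSum_gamble {f : X → ℝ} (hf : IsGamble f) (n : ℕ) : IsGamble (ergSum T f n) := by
  have H := isGamble_sum (Finset.range n) (fun k => f ∘ T^[k]) (fun k _ => hf.comp _)
  exact isGamble_congr (fun x => by simp [Finset.sum_apply, ergSum, Function.comp]) H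

lemma ergSum_zero (f : X → ℝ) : ergSum T f 0 = 0 := by
  funext x; simp [ergSum]

lemma ergSum_add (f : X → ℝ) (m n : ℕ) :
    ergSum T f (m + n) = ergSum T f m + (ergSum T f n) ∘ T^[m] := by
  funext x
  simp only [ergSum, Pi.add_apply, Function.comp_apply]
  rw [Finset.sum_range_add]
  congr 1
  refine Finset.sum_congr rfl fun k _ => ?_
  rw [← Function.iterate_add_apply, add_comm]

lemma ergSum_le_sup {f : X → ℝ} (hf : IsGamble f) (n : ℕ) (x : X) :
    ergSum T f n x ≤ n * sSup (Set.range f) := by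
  calc ergSum T f n x ≤ ∑ _k ∈ Finset.range n, sSup (Set.range f) :=
        Finset.sum_le_sum fun k _ => hf.le_sSup _
    _ = n * sSup (Set.range f) := by simp [mul_comm]

lemma inf_le_ergSum {f : X → ℝ} (hf : IsGamble f) (n : ℕ) (x : X) :
    n * sInf (Set.range f) ≤ ergSum T f n x := by
  calc (n : ℝ) * sInf (Set.range f) = ∑ _k ∈ Finset.range n, sInf (Set.range f) := by
        simp [mul_comm]
    _ ≤ ergSum T f n x := Finset.sum_le_sum fun k _ => hf.sInf_le _

lemma ergAvg_eq_smul (f : X → ℝ) (n : ℕ) :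
    (fun x => (∑ k ∈ Finset.range (n+1), f (T^[k] x)) / ((n : ℝ) + 1)) =
      (((n:ℝ) + 1)⁻¹) • ergSum T f (n+1) := by
  funext x
  simp [ergSum, div_eq_inv_mul]

lemma ergAvg_gamble {f : X → ℝ} (hf : IsGamble f) (n : ℕ) :
    IsGamble (fun x => (∑ k ∈ Finset.range (n+1), f (T^[k] x)) / ((n : ℝ) + 1)) := by
  rw [ergAvg_eq_smul]
  exact (ergSum_gamble hf (n+1)).smul _

lemma ergAvg_zero (f : X → ℝ) :
    (fun x => (∑ k ∈ Finset.range (0+1), f (T^[k] x)) / ((0 : ℝ) + 1)) = f := by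
  funext x
  simp

lemma telescope_sub (f : X → ℝ) (n : ℕ) (x : X) :
    (∑ k ∈ Finset.range (n+1), (f - f ∘ T) (T^[k] x)) = f x - f (T^[n+1] x) := by
  have h := Finset.sum_range_sub' (fun k => f (T^[k] x)) (n+1)
  simp only [Function.iterate_zero_apply] at h
  rw [← h]
  refine Finset.sum_congr rfl fun k _ => ?_
  simp [Function.iterate_succ_apply', Function.comp]

lemma telescope_sub' (f : X → ℝ) (n : ℕ) (x : X) :
    (∑ k ∈ Finset.range (n+1), (f ∘ T - f) (T^[k] x)) = f (T^[n+1] x) - f x := by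
  have h := telescope_sub (T := T) f n x
  have : ∀ k, (f ∘ T - f) (T^[k] x) = -((f - f ∘ T) (T^[k] x)) := fun k => by
    simp [Function.comp]
  simp only [this, Finset.sum_neg_distrib, h]
  ring

end Erg
section CLP3
variable {X : Type*} [Nonempty X] {T : X → X} {M' : (X → ℝ) → ℝ}

lemma clp_sub_iterate (hM : IsCoherentLowerPrevision M')
    (hinv : ∀ f : X → ℝ, IsGamble f → 0 ≤ M' (f - f ∘ T) ∧ 0 ≤ M' (f ∘ T - f))
    {f : X → ℝ} (hf : IsGamble f) (k : ℕ) : 0 ≤ M' (f - f ∘ T^[k]) := by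
  induction k with
  | zero =>
    have : f - f ∘ T^[0] = 0 := by
      funext x; simp
    rw [this, clp_zero hM]
  | succ k ih =>
    have key : f - f ∘ T^[k+1] = (f - f ∘ T^[k]) + (f ∘ T^[k] - (f ∘ T^[k]) ∘ T) := by
      funext x
      simp only [Pi.add_apply, Pi.sub_apply, Function.comp_apply,
        Function.iterate_succ_apply]
      ring
    rw [key]
    have h1 := hM.2.1 (f - f ∘ T^[k]) (f ∘ T^[k] - (f ∘ T^[k]) ∘ T)
      (hf.sub (hf.comp _)) ((hf.comp _).sub ((hf.comp _).comp _))
    have h2 := (hinv (f ∘ T^[k]) (hf.comp _)).1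
    linarith

lemma clp_avg_le (hM : IsCoherentLowerPrevision M')
    (hinv : ∀ f : X → ℝ, IsGamble f → 0 ≤ M' (f - f ∘ T) ∧ 0 ≤ M' (f ∘ T - f))
    {f : X → ℝ} (hf : IsGamble f) (n : ℕ) :
    M' (fun x => (∑ k ∈ Finset.range (n+1), f (T^[k] x)) / ((n : ℝ) + 1)) ≤ M' f := by
  set A : X → ℝ := fun x => (∑ k ∈ Finset.range (n+1), f (T^[k] x)) / ((n : ℝ) + 1) with hA
  have hpos : (0:ℝ) < (n : ℝ) + 1 := by positivity
  have hAg : IsGamble A := ergAvg_gamble hf n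
  have hkey : f - A = (((n:ℝ) + 1)⁻¹) • (∑ k ∈ Finset.range (n+1), (f - f ∘ T^[k])) := by
    funext x
    simp only [Pi.sub_apply, Pi.smul_apply, Finset.sum_apply, smul_eq_mul, hA,
      Function.comp_apply, Finset.sum_sub_distrib, Finset.sum_const, Finset.card_range,
      nsmul_eq_mul]
    push_cast
    field_simp
    simp only [Pi.mul_apply, Pi.add_apply, Pi.one_apply, Pi.natCast_apply]
    ring
  have hsg : IsGamble (∑ k ∈ Finset.range (n+1), (f - f ∘ T^[k])) :=
    isGamble_sum _ _ (fun k _ => hf.sub (hf.comp _))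
  have h0 : 0 ≤ M' (f - A) := by
    rw [hkey, hM.2.2 _ hsg _ (by positivity)]
    refine mul_nonneg (by positivity) ?_
    refine le_trans ?_ (clp_sum hM _ _ (fun k _ => hf.sub (hf.comp _)))
    refine Finset.sum_nonneg fun k _ => clp_sub_iterate hM hinv hf k
  have h1 := hM.2.1 A (f - A) hAg (hf.sub hAg)
  have h2 : A + (f - A) = f := by funext x; simp
  rw [h2] at h1
  linarith

end CLP3

section ErgNatExt
variable {X : Type*} [Nonempty X] {T : X → X} {𝒦 : Set (X → ℝ)} {L : (X → ℝ) → ℝ}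
variable (h𝒦g : ∀ f ∈ 𝒦, IsGamble f) (hasl : AvoidsSureLoss 𝒦 L)
variable (h𝒦T : ∀ f ∈ 𝒦, f ∘ T ∈ 𝒦) (hweak : ∀ f ∈ 𝒦, L f ≤ L (f ∘ T))

include h𝒦g hasl h𝒦T hweak

lemma natExt_iterate_le {g : X → ℝ} (hg : IsGamble g) (m : ℕ) :
    NatExt 𝒦 L g ≤ NatExt 𝒦 L (g ∘ T^[m]) := by
  induction m with
  | zero =>
    have : g ∘ T^[0] = g := by funext x; simp
    rw [this]
  | succ m ih =>
    have : g ∘ T^[m+1] = (g ∘ T^[m]) ∘ T := by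
      funext x; simp [Function.iterate_succ_apply]
    rw [this]
    exact ih.trans (natExt_comp_le h𝒦g hasl h𝒦T hweak (hg.comp _))

lemma natExt_ergSum_superadd {f : X → ℝ} (hf : IsGamble f) (m n : ℕ) :
    NatExt 𝒦 L (ergSum T f m) + NatExt 𝒦 L (ergSum T f n) ≤
      NatExt 𝒦 L (ergSum T f (m + n)) := by
  rw [ergSum_add f m n]
  refine le_trans (add_le_add (le_refl _) (natExt_iterate_le h𝒦g hasl h𝒦T hweak
    (ergSum_gamble hf n) m)) ?_
  exact natExt_superadd h𝒦g hasl (ergSum_gamble hf m) ((ergSum_gamble hf n).comp _)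

end ErgNatExt
section MainSeq
open Filter Topology
variable {X : Type*} [Nonempty X] {T : X → X} {𝒦 : Set (X → ℝ)} {L : (X → ℝ) → ℝ}
variable (h𝒦g : ∀ f ∈ 𝒦, IsGamble f) (hasl : AvoidsSureLoss 𝒦 L)
variable (h𝒦T : ∀ f ∈ 𝒦, f ∘ T ∈ 𝒦) (hweak : ∀ f ∈ 𝒦, L f ≤ L (f ∘ T))

include h𝒦g hasl h𝒦T hweak

lemma main_seq {f : X → ℝ} (hf : IsGamble f) :
    Filter.Tendsto (fun n : ℕ => NatExt 𝒦 L (fun x =>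
        (∑ k ∈ Finset.range (n+1), f (T^[k] x)) / ((n : ℝ) + 1)))
      Filter.atTop (nhds (⨆ n : ℕ, NatExt 𝒦 L (fun x =>
        (∑ k ∈ Finset.range (n+1), f (T^[k] x)) / ((n : ℝ) + 1)))) ∧
    BddAbove (Set.range (fun n : ℕ => NatExt 𝒦 L (fun x =>
        (∑ k ∈ Finset.range (n+1), f (T^[k] x)) / ((n : ℝ) + 1)))) := by
  set u : ℕ → ℝ := fun m => NatExt 𝒦 L (ergSum T f m) with hu
  set a : ℕ → ℝ := fun n : ℕ => NatExt 𝒦 L (fun x =>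
        (∑ k ∈ Finset.range (n+1), f (T^[k] x)) / ((n : ℝ) + 1)) with haa
  have ha : ∀ n : ℕ, a n = u (n+1) / ((n:ℝ)+1) := by
    intro n
    have hpos : (0:ℝ) < (n:ℝ) + 1 := by positivity
    rw [haa]
    simp only
    rw [ergAvg_eq_smul (T := T) f n,
      natExt_smul h𝒦g hasl (ergSum_gamble hf (n+1)) (inv_nonneg.2 hpos.le),
      div_eq_inv_mul]
  have hu0 : u 0 = 0 := by
    rw [hu]; simp only [ergSum_zero]; exact natExt_zero h𝒦g hasl
  have hsub : Subadditive (fun m => -u m) := by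
    intro m n
    have := natExt_ergSum_superadd h𝒦g hasl h𝒦T hweak hf m n
    simp only [hu] at this ⊢
    linarith
  set B : ℝ := max (sSup (Set.range f)) 0 with hB
  have hdiv : ∀ m : ℕ, u m / (m:ℝ) ≤ B := by
    intro m
    match m with
    | 0 => simp [hu0, hB]
    | (m+1) =>
      have hpos : (0:ℝ) < ((m+1 : ℕ):ℝ) := by positivity
      have h1 : u (m+1) ≤ ((m+1:ℕ):ℝ) * sSup (Set.range f) := by
        refine (natExt_le_sSup h𝒦g hasl (ergSum_gamble hf (m+1))).trans ?_
        refine csSup_le (Set.range_nonempty _) ?_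
        rintro _ ⟨x, rfl⟩
        exact_mod_cast ergSum_le_sup hf (m+1) x
      have h2 : u (m+1) / ((m+1:ℕ):ℝ) ≤ sSup (Set.range f) := by
        rw [div_le_iff₀ hpos]; linarith [h1]
      exact h2.trans (le_max_left _ _)
  have hbddb : BddBelow (Set.range fun m : ℕ => (-u m) / (m:ℝ)) := by
    refine ⟨-B, ?_⟩
    rintro _ ⟨m, rfl⟩
    have := hdiv m
    simp only [neg_div]
    linarith
  have hlim := hsub.tendsto_lim hbddb
  set ℓ : ℝ := -hsub.lim with hℓ
  have htends : Tendsto (fun m : ℕ => u m / (m:ℝ)) atTop (𝓝 ℓ) := by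
    have := hlim.neg
    rw [hℓ]
    refine this.congr fun m => ?_
    simp [neg_div]
  have htendA : Tendsto a atTop (𝓝 ℓ) := by
    have hcomp : Tendsto (fun n : ℕ => n + 1) atTop atTop := tendsto_add_atTop_nat 1
    refine (htends.comp hcomp).congr fun n => ?_
    rw [ha n]
    simp [Function.comp]
  have hle : ∀ n, a n ≤ ℓ := by
    intro n
    have h1 := hsub.lim_le_div hbddb (n := n+1) (by omega)
    rw [neg_div] at h1
    rw [ha n, hℓ]
    push_cast at h1 ⊢
    linarith
  have hBdd : BddAbove (Set.range a) := ⟨ℓ, by rintro _ ⟨n, rfl⟩; exact hle n⟩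
  have hsup : (⨆ n, a n) = ℓ :=
    le_antisymm (ciSup_le hle)
      (le_of_tendsto htendA (Filter.Eventually.of_forall fun n => le_ciSup hBdd n))
  exact ⟨hsup ▸ htendA, hBdd⟩

end MainSeq

theorem stmt11 (X : Type*) [Nonempty X] (T : X → X)
    (𝒦 : Set (X → ℝ)) (h𝒦g : ∀ f ∈ 𝒦, IsGamble f)
    (h𝒦T : ∀ f ∈ 𝒦, f ∘ T ∈ 𝒦)
    (L : (X → ℝ) → ℝ) (hasl : AvoidsSureLoss 𝒦 L)
    (hweak : ∀ f ∈ 𝒦, L f ≤ L (f ∘ T)) :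
    ∃ M : (X → ℝ) → ℝ, IsCoherentLowerPrevision M ∧
      (∀ f : X → ℝ, IsGamble f → 0 ≤ M (f - f ∘ T) ∧ 0 ≤ M (f ∘ T - f)) ∧
      (∀ f ∈ 𝒦, L f ≤ M f) ∧
      (∀ M' : (X → ℝ) → ℝ, IsCoherentLowerPrevision M' →
        (∀ f : X → ℝ, IsGamble f → 0 ≤ M' (f - f ∘ T) ∧ 0 ≤ M' (f ∘ T - f)) →
        (∀ f ∈ 𝒦, L f ≤ M' f) →
        ∀ f : X → ℝ, IsGamble f → M f ≤ M' f) ∧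
      (∀ f : X → ℝ, IsGamble f →
        Filter.Tendsto (fun n : ℕ =>
            NatExt 𝒦 L (fun x =>
              (∑ k ∈ Finset.range (n+1), f (T^[k] x)) / ((n : ℝ) + 1)))
          Filter.atTop (nhds (M f)) ∧
        M f = ⨆ n : ℕ, NatExt 𝒦 L (fun x =>
              (∑ k ∈ Finset.range (n+1), f (T^[k] x)) / ((n : ℝ) + 1))) := by
  classical
  set M : (X → ℝ) → ℝ := fun f => ⨆ n : ℕ, NatExt 𝒦 L (fun x =>
      (∑ k ∈ Finset.range (n+1), f (T^[k] x)) / ((n : ℝ) + 1)) with hM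
  have hbdd : ∀ f : X → ℝ, IsGamble f → BddAbove (Set.range (fun n : ℕ =>
      NatExt 𝒦 L (fun x => (∑ k ∈ Finset.range (n+1), f (T^[k] x)) / ((n : ℝ) + 1)))) :=
    fun f hf => (main_seq h𝒦g hasl h𝒦T hweak hf).2
  have htend : ∀ f : X → ℝ, IsGamble f → Filter.Tendsto (fun n : ℕ =>
      NatExt 𝒦 L (fun x => (∑ k ∈ Finset.range (n+1), f (T^[k] x)) / ((n : ℝ) + 1)))
      Filter.atTop (nhds (M f)) :=
    fun f hf => (main_seq h𝒦g hasl h𝒦T hweak hf).1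
  have havg0 : ∀ f : X → ℝ,
      (fun x => (∑ k ∈ Finset.range (0+1), f (T^[k] x)) / (((0:ℕ) : ℝ) + 1)) = f := by
    intro f; funext x; simp
  have hMge : ∀ f : X → ℝ, IsGamble f → ∀ n : ℕ,
      NatExt 𝒦 L (fun x => (∑ k ∈ Finset.range (n+1), f (T^[k] x)) / ((n : ℝ) + 1)) ≤ M f :=
    fun f hf n => le_ciSup (hbdd f hf) n
  refine ⟨M, ⟨?_, ?_, ?_⟩, ?_, ?_, ?_, ?_⟩
  · -- inf ≤ M f
    intro f hf
    refine le_trans ?_ (hMge f hf 0)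
    rw [havg0 f]
    exact sInf_le_natExt h𝒦g hasl hf
  · -- superadditivity
    intro f g hf hg
    have hptw : ∀ n : ℕ,
        NatExt 𝒦 L (fun x => (∑ k ∈ Finset.range (n+1), f (T^[k] x)) / ((n : ℝ) + 1)) +
        NatExt 𝒦 L (fun x => (∑ k ∈ Finset.range (n+1), g (T^[k] x)) / ((n : ℝ) + 1)) ≤
        NatExt 𝒦 L (fun x => (∑ k ∈ Finset.range (n+1), (f + g) (T^[k] x)) / ((n : ℝ) + 1)) := by
      intro n
      have heq : (fun x => (∑ k ∈ Finset.range (n+1), (f + g) (T^[k] x)) / ((n : ℝ) + 1)) =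
          (fun x => (∑ k ∈ Finset.range (n+1), f (T^[k] x)) / ((n : ℝ) + 1)) +
          (fun x => (∑ k ∈ Finset.range (n+1), g (T^[k] x)) / ((n : ℝ) + 1)) := by
        funext x
        simp only [Pi.add_apply, Finset.sum_add_distrib, add_div]
      rw [heq]
      exact natExt_superadd h𝒦g hasl (ergAvg_gamble hf n) (ergAvg_gamble hg n)
    exact le_of_tendsto_of_tendsto' ((htend f hf).add (htend g hg))
      (htend (f + g) (hf.add hg)) hptw
  · -- homogeneity
    intro f hf c hc
    have heq : ∀ n : ℕ,
        NatExt 𝒦 L (fun x => (∑ k ∈ Finset.range (n+1), (c • f) (T^[k] x)) / ((n : ℝ) + 1)) =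
        c * NatExt 𝒦 L (fun x => (∑ k ∈ Finset.range (n+1), f (T^[k] x)) / ((n : ℝ) + 1)) := by
      intro n
      have h2 : (fun x => (∑ k ∈ Finset.range (n+1), (c • f) (T^[k] x)) / ((n : ℝ) + 1)) =
          c • (fun x => (∑ k ∈ Finset.range (n+1), f (T^[k] x)) / ((n : ℝ) + 1)) := by
        funext x
        simp only [Pi.smul_apply, smul_eq_mul, ← Finset.mul_sum, mul_div_assoc]
      rw [h2]
      exact natExt_smul h𝒦g hasl (ergAvg_gamble hf n) hc
    calc M (c • f) = ⨆ n : ℕ, c * NatExt 𝒦 L (fun x =>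
          (∑ k ∈ Finset.range (n+1), f (T^[k] x)) / ((n : ℝ) + 1)) := iSup_congr heq
      _ = c * M f := (Real.mul_iSup_of_nonneg hc _).symm
  · -- strong invariance
    intro f hf
    have hC : ∀ (g : X → ℝ), IsGamble g →
        (∀ n : ℕ, ∀ x : X, sInf (Set.range f) - sSup (Set.range f) ≤
          ∑ k ∈ Finset.range (n+1), g (T^[k] x)) → 0 ≤ M g := by
      intro g hg hlow
      have hseq : ∀ n : ℕ, (sInf (Set.range f) - sSup (Set.range f)) / ((n:ℝ)+1) ≤ M g := by
        intro n
        refine le_trans ?_ (hMge g hg n)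
        refine le_trans ?_ (sInf_le_natExt h𝒦g hasl (ergAvg_gamble hg n))
        refine le_csInf (Set.range_nonempty _) ?_
        rintro _ ⟨x, rfl⟩
        have hpos : (0:ℝ) < (n:ℝ) + 1 := by positivity
        simp only
        exact (div_le_div_iff_of_pos_right hpos).2 (hlow n x)
      have htz : Filter.Tendsto (fun n : ℕ =>
          (sInf (Set.range f) - sSup (Set.range f)) / ((n:ℝ)+1)) Filter.atTop (nhds 0) := by
        have h1 := tendsto_const_div_atTop_nhds_zero_nat (sInf (Set.range f) - sSup (Set.range f))
        have h2 := h1.comp (Filter.tendsto_add_atTop_nat 1)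
        refine h2.congr fun n => ?_
        simp [Function.comp]
      exact le_of_tendsto htz (Filter.Eventually.of_forall hseq)
    constructor
    · refine hC (f - f ∘ T) (hf.sub (hf.comp T)) fun n x => ?_
      rw [telescope_sub (T := T) f n x]
      have := hf.sInf_le x
      have := hf.le_sSup (T^[n+1] x)
      linarith
    · refine hC (f ∘ T - f) ((hf.comp T).sub hf) fun n x => ?_
      rw [telescope_sub' (T := T) f n x]
      have := hf.sInf_le (T^[n+1] x)
      have := hf.le_sSup x
      linarith
  · -- dominates L
    intro f hfK
    refine le_trans ?_ (hMge f (h𝒦g f hfK) 0)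
    rw [havg0 f]
    exact le_natExt_of_memK h𝒦g hasl hfK
  · -- minimality
    intro M' hM' hinv' hdom' f hf
    refine ciSup_le fun n => ?_
    exact (clp_natExt_le hM' h𝒦g hdom' (ergAvg_gamble hf n)).trans
      (clp_avg_le hM' hinv' hf n)
  · -- limit and sup
    intro f hf
    exact ⟨htend f hf, rfl⟩
end
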